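/- arXiv:1907.00956 — 5 statements merged into one kernel-verified Lean document; each statement's English description precedes it below -/
import Mathlib

section
/- For any execution of the dispersal rule on a graph environment G in which no two agents settle at the same instant, the directed graph G(t) is a tree (rooted at the source s) at every time t at which it is nonempty. -/
/-!
Model of Amir–Bruckstein "Fast Uniform Dispersion of a Crash-prone Swarm".

Agents are indexed by a type `A` (usually `ℕ`, agent `i` standing for `A_{i+1}`).
An execution is driven by an `EventOrder`: a sequence of events, each being the
activation or the deletion of a specified agent, at strictly increasing real times.
`cfg k` is the configuration before the `k`-th event.
-/

inductive AgentState (V : Type) where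
  | outside : AgentState V
  | mobile (v : V) : AgentState V
  | settled (v : V) (mark : Option V) : AgentState V
  | deleted : AgentState V

/-- The vertex occupied by an agent in a given state, if any. -/
def AgentState.pos {V : Type} : AgentState V → Option V
  | .outside => none
  | .mobile v => some v
  | .settled v _ => some v
  | .deleted => none

/-- A configuration: the state of each agent. -/
abbrev Config (A V : Type) := A → AgentState V

/-- Some settled agent occupies `v`. -/
def settledAt {A V : Type} (c : Config A V) (v : V) : Prop :=
  ∃ i m, c i = AgentState.settled v m

/-- Some mobile agent occupies `v`. -/
def mobileAt {A V : Type} (c : Config A V) (v : V) : Prop :=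
  ∃ i, c i = AgentState.mobile v

/-- The vertex `v` is empty. -/
def emptyAt {A V : Type} (c : Config A V) (v : V) : Prop :=
  ¬ settledAt c v ∧ ¬ mobileAt c v

/-- Vertex `u` contains exactly one agent: a settled agent marking `v`. -/
def soleSettledMarking {A V : Type} (c : Config A V) (u v : V) : Prop :=
  (∃ i, c i = AgentState.settled u (some v)) ∧ ¬ mobileAt c u

/-- A mobile agent at `v` has some vertex it could move to, per the local rule. -/
def canMoveFrom {A V : Type} (G : SimpleGraph V) (c : Config A V) (v : V) : Prop :=
  ∃ u, G.Adj v u ∧ (soleSettledMarking c u v ∨ emptyAt c u)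

/-- An outside agent `i` may enter the source `s`: all lower-indexed agents have
entered or been deleted, and `s` holds no mobile agent. -/
def canEnter {V : Type} (c : Config ℕ V) (s : V) (i : ℕ) : Prop :=
  (∀ j < i, c j ≠ AgentState.outside) ∧ ¬ mobileAt c s

/-- Each vertex holds at most one settled and at most one mobile agent. -/
def Capacity {A V : Type} (c : Config A V) : Prop :=
  (∀ v (i j : A) mi mj, c i = AgentState.settled v mi → c j = AgentState.settled v mj → i = j) ∧
  (∀ v (i j : A), c i = AgentState.mobile v → c j = AgentState.mobile v → i = j)

/-- An event: at `time`, the agent `agent` is activated (`isDel = false`) or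
activated-and-deleted (`isDel = true`). -/
structure Event where
  time : ℝ
  agent : ℕ
  isDel : Bool

/-- An event order: events at strictly increasing times, tending to infinity. -/
structure EventOrder where
  ev : ℕ → Event
  strict : StrictMono fun k => (ev k).time
  unbounded : Filter.Tendsto (fun k => (ev k).time) Filter.atTop Filter.atTop

/-- The legal outcomes `next` for the state of agent `i` when it is activated (and
not deleted) in configuration `c`, on environment `G` with source `s`.  This is
Algorithm 1 together with the entrance rule. -/
def ActOK {V : Type} (G : SimpleGraph V) (s : V) (c : Config ℕ V) (i : ℕ)
    (next : AgentState V) : Prop :=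
  match c i with
  | AgentState.outside =>
      (canEnter c s i ∧ emptyAt c s ∧ next = AgentState.settled s none) ∨
      (canEnter c s i ∧ ¬ emptyAt c s ∧ next = AgentState.mobile s) ∨
      (¬ canEnter c s i ∧ next = AgentState.outside)
  | AgentState.mobile v =>
      (∃ u, G.Adj v u ∧ soleSettledMarking c u v ∧ next = AgentState.mobile u) ∨
      ((¬ ∃ u, G.Adj v u ∧ soleSettledMarking c u v) ∧
        ∃ u, G.Adj v u ∧ emptyAt c u ∧ next = AgentState.settled u (some v)) ∨
      (¬ canMoveFrom G c v ∧ next = AgentState.mobile v)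
  | AgentState.settled v m => next = AgentState.settled v m
  | AgentState.deleted => next = AgentState.deleted

/-- Agent `i` attempts to move when activated in configuration `c`. -/
def AttemptsMove {V : Type} (G : SimpleGraph V) (s : V) (c : Config ℕ V) (i : ℕ) : Prop :=
  match c i with
  | AgentState.outside => canEnter c s i
  | AgentState.mobile v => canMoveFrom G c v
  | AgentState.settled _ _ => False
  | AgentState.deleted => False

/-- A simulation of an event order on the environment `G` with source `s`.
Deletions may occur at any scheduled deletion event (as is allowed when an event
order is simulated on an environment other than the one it arose from). -/
structure Exec (V : Type) (G : SimpleGraph V) (s : V) where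
  S : EventOrder
  cfg : ℕ → Config ℕ V
  init : ∀ i, cfg 0 i = AgentState.outside
  cap : ∀ k, Capacity (cfg k)
  frozen : ∀ k j, j ≠ (S.ev k).agent → cfg (k + 1) j = cfg k j
  act : ∀ k, (S.ev k).isDel = false →
    ActOK G s (cfg k) (S.ev k).agent (cfg (k + 1) (S.ev k).agent)
  del : ∀ k, (S.ev k).isDel = true → cfg (k + 1) (S.ev k).agent = AgentState.deleted

/-- An execution that could arise on the environment `G` itself: agents are
deleted only when activated and attempting to move. -/
structure ExecG (V : Type) (G : SimpleGraph V) (s : V) extends Exec V G s where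
  delLegal : ∀ k, (S.ev k).isDel = true → AttemptsMove G s (cfg k) (S.ev k).agent

/-- Agent `i` performs a successful move at step `k` (entering the source counts). -/
def movedAt {V : Type} {G : SimpleGraph V} {s : V} (E : Exec V G s) (i k : ℕ) : Prop :=
  ∃ v : V, (E.cfg (k + 1) i).pos = some v ∧ (E.cfg k i).pos ≠ some v

/-- The depth of agent `i` at step `k`: the number of successful moves made before `k`. -/
noncomputable def depth {V : Type} {G : SimpleGraph V} {s : V} (E : Exec V G s)
    (i k : ℕ) : ℕ :=
  Set.ncard {j | j < k ∧ movedAt E i j}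

/-- Slow vertices, relative to a parent function `par` describing the tree.
A vertex becomes slow when a mobile agent on it is activated and finds no vertex
it can move to, while all its descendants in the tree are already slow;
slowness persists forever. -/
inductive SlowVtx {V : Type} (G : SimpleGraph V) (s : V) (par : V → Option V)
    (E : Exec V G s) : ℕ → V → Prop
  | trigger (k : ℕ) (v : V) :
      (E.S.ev k).isDel = false →
      E.cfg k ((E.S.ev k).agent) = AgentState.mobile v →
      ¬ canMoveFrom G (E.cfg k) v →
      (∀ u, par u = some v → SlowVtx G s par E k u) →
      SlowVtx G s par E (k + 1) v
  | persist (k : ℕ) (v : V) : SlowVtx G s par E k v → SlowVtx G s par E (k + 1) v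

/-- Iterated parent map. -/
def parIter {V : Type} (par : V → Option V) : ℕ → V → Option V
  | 0, v => some v
  | m + 1, v => (par v).bind (parIter par m)

/-- A spanning tree of `G` rooted at `s`, given by a parent function. -/
structure SpanningTreeOn (V : Type) (G : SimpleGraph V) (s : V) where
  par : V → Option V
  root_iff : ∀ v, par v = none ↔ v = s
  adj : ∀ v u, par v = some u → G.Adj v u
  reach : ∀ v, ∃ m, parIter par m v = some s

/-- The marks of settled agents follow the tree `T` (so `G(t) ⊆ T` at all times). -/
def MarksFollow {V : Type} {G : SimpleGraph V} {s : V} (E : Exec V G s)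
    (T : SpanningTreeOn V G s) : Prop :=
  ∀ k i v m, E.cfg k i = AgentState.settled v m → T.par v = m

/-- Agents traverse only edges of the tree `T`, moving from parent to child
(entering the environment only at the root `s`). -/
def MovesOnTree {V : Type} {G : SimpleGraph V} {s : V} (E : Exec V G s)
    (T : SpanningTreeOn V G s) : Prop :=
  ∀ k i u, (E.cfg k i).pos ≠ some u → (E.cfg (k + 1) i).pos = some u →
    (u = s ∧ E.cfg k i = AgentState.outside) ∨
    (∃ v, (E.cfg k i).pos = some v ∧ T.par u = some v)

/-- Agent `i` is slow at step `k` (it occupies a slow vertex). -/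
def AgentSlow {V : Type} {G : SimpleGraph V} {s : V} (par : V → Option V)
    (E : Exec V G s) (k i : ℕ) : Prop :=
  ∃ v, (E.cfg k i).pos = some v ∧ SlowVtx G s par E k v

/-- Agent `i` is settled at step `k`. -/
def AgentSettled {V : Type} {G : SimpleGraph V} {s : V} (E : Exec V G s) (k i : ℕ) : Prop :=
  ∃ v m, E.cfg k i = AgentState.settled v m

/-- Parent function of the path graph `P(n)`: `v_0` is the root and the parent of
`v_{i+1}` is `v_i`. -/
def pathPar (n : ℕ) : Fin n → Option (Fin n) := fun v =>
  if _ : (v : ℕ) = 0 then none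
  else some ⟨(v : ℕ) - 1, lt_of_le_of_lt (Nat.sub_le _ _) v.isLt⟩

/-- The one-sided infinite path `P(∞)` on `ℕ`. -/
def pathInf : SimpleGraph ℕ := SimpleGraph.fromRel (fun a b => b = a + 1)

/-- Parent function of `P(∞)`, rooted at `0`. -/
def pathInfPar : ℕ → Option ℕ := fun v => if v = 0 then none else some (v - 1)

/-- The meaningful event times of an event order: `idx m` is the index of the
event `t_m`, the first event after `t_{m-1}` at which one of the agents
`A_1, …, A_{m+1}` (indices `0, …, m`) acts. -/
structure MeaningfulTimes (S : EventOrder) where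
  idx : ℕ → ℕ
  mono : StrictMono idx
  agent_le : ∀ m, (S.ev (idx m)).agent ≤ m
  first0 : ∀ k < idx 0, (S.ev k).agent ≠ 0
  least : ∀ m k, idx m < k → k < idx (m + 1) → ¬ ((S.ev k).agent ≤ m + 1)

/-- The directed graph of settled agents and their marks is a tree rooted at `s`:
`s` is settled; an agent has no mark exactly when it sits at `s`; marks point along
edges of `G` to settled vertices; and every settled vertex reaches `s` by a chain
of marks. -/
def IsMarkTree {V : Type} (G : SimpleGraph V) (s : V) (c : Config ℕ V) : Prop :=
  settledAt c s ∧
  (∀ i v m, c i = AgentState.settled v m → (m = none ↔ v = s)) ∧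
  (∀ i v u, c i = AgentState.settled v (some u) → G.Adj v u ∧ settledAt c u) ∧
  (∀ v, settledAt c v →
    ∃ (m : ℕ) (f : ℕ → V), f 0 = v ∧ f m = s ∧
      ∀ j < m, ∃ i, c i = AgentState.settled (f j) (some (f (j + 1))))

/-- The first step (as an extended natural) at which a predicate holds. -/
noncomputable def firstStep (P : ℕ → Prop) : ℕ∞ :=
  sInf {m : ℕ∞ | ∃ k : ℕ, m = (k : ℕ∞) ∧ P k}

/-- The number of events of `S` occurring before (real) time `t`; since event times
are strictly increasing, the configuration at time `t` is `cfg (stepsBefore S t)`. -/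
noncomputable def stepsBefore (S : EventOrder) (t : ℝ) : ℕ :=
  Set.ncard {k | (S.ev k).time < t}

/-- Statement (a): every non-deleted agent whose copy in `G` is neither slow nor
settled has depth in `G` at least its depth in `P(n)`. -/
def StmtA {V : Type} {G : SimpleGraph V} {s : V} (n : ℕ) (hn : 0 < n)
    (EG : Exec V G s) (TG : SpanningTreeOn V G s)
    (EP : Exec (Fin n) (SimpleGraph.pathGraph n) ⟨0, hn⟩) (k : ℕ) : Prop :=
  ∀ i, EG.cfg k i ≠ AgentState.deleted →
    ¬ (AgentSlow TG.par EG k i ∨ AgentSettled EG k i) →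
    depth EP i k ≤ depth EG i k

/-- Statement (b): for every non-deleted agent, if its copy in `P(n)` is slow or
settled then its copy in `G` is slow or settled, and its depth in `G` is at most
its depth in `P(n)`. -/
def StmtB {V : Type} {G : SimpleGraph V} {s : V} (n : ℕ) (hn : 0 < n)
    (EG : Exec V G s) (TG : SpanningTreeOn V G s)
    (EP : Exec (Fin n) (SimpleGraph.pathGraph n) ⟨0, hn⟩) (k : ℕ) : Prop :=
  ∀ i, EG.cfg k i ≠ AgentState.deleted →
    (AgentSlow (pathPar n) EP k i ∨ AgentSettled EP k i) →
    ((AgentSlow TG.par EG k i ∨ AgentSettled EG k i) ∧ depth EG i k ≤ depth EP i k)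

section Aux

variable {V : Type}

lemma settled_mono' {c c' : Config ℕ V}
    (h : ∀ i v m, c i = AgentState.settled v m → c' i = AgentState.settled v m)
    {v : V} (hv : settledAt c v) : settledAt c' v := by
  obtain ⟨i, m, hi⟩ := hv; exact ⟨i, m, h i v m hi⟩

lemma markTree_congr' {G : SimpleGraph V} {s : V} {c c' : Config ℕ V}
    (h : ∀ i v m, c i = AgentState.settled v m ↔ c' i = AgentState.settled v m)
    (hT : IsMarkTree G s c) : IsMarkTree G s c' := by
  have h1 : ∀ i v m, c i = AgentState.settled v m → c' i = AgentState.settled v m :=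
    fun i v m => (h i v m).1
  have h2 : ∀ i v m, c' i = AgentState.settled v m → c i = AgentState.settled v m :=
    fun i v m => (h i v m).2
  obtain ⟨hs, hm, hadj, hreach⟩ := hT
  refine ⟨settled_mono' h1 hs, ?_, ?_, ?_⟩
  · exact fun i v m hi => hm i v m (h2 i v m hi)
  · rintro i v u hi
    obtain ⟨ha, hsu⟩ := hadj i v u (h2 i v (some u) hi)
    exact ⟨ha, settled_mono' h1 hsu⟩
  · rintro v ⟨i, m, hi⟩
    obtain ⟨n, f, hf0, hfn, hchain⟩ := hreach v ⟨i, m, h2 i v m hi⟩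
    exact ⟨n, f, hf0, hfn, fun j hj => (hchain j hj).imp fun i hi => h1 _ _ _ hi⟩

lemma main_inv {G : SimpleGraph V} {s : V} (E : ExecG V G s) (k : ℕ) :
    (∀ i v, E.cfg k i = AgentState.mobile v → settledAt (E.cfg k) v) ∧
    ((∃ v, settledAt (E.cfg k) v) → IsMarkTree G s (E.cfg k)) := by
  induction k with
  | zero =>
    constructor
    · intro i v hi; rw [E.init] at hi; cases hi
    · rintro ⟨v, i, m, hi⟩; rw [E.init] at hi; cases hi
  | succ k IH =>
    obtain ⟨IHm, IHt⟩ := IH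
    set a := (E.S.ev k).agent with ha
    cases hdel : (E.S.ev k).isDel
    · -- activation
      have hact := E.toExec.act k hdel
      rw [← ha] at hact
      unfold ActOK at hact
      cases hc : E.cfg k a with
      | outside =>
        rw [hc] at hact
        rcases hact with ⟨hen, hemp, hnext⟩ | ⟨hen, hemp, hnext⟩ | ⟨hen, hnext⟩
        · -- settles at s; no settled agents at k
          have hnoset : ¬ ∃ v, settledAt (E.cfg k) v := by
            rintro hne
            exact hemp.1 (IHt hne).1
          have hset' : ∀ i v m, E.cfg (k+1) i = AgentState.settled v m →
              i = a ∧ v = s ∧ m = none := by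
            intro i v m hi
            by_cases hia : i = a
            · subst hia; rw [hnext] at hi
              cases hi; exact ⟨rfl, rfl, rfl⟩
            · rw [E.frozen k i hia] at hi
              exact absurd ⟨v, i, m, hi⟩ hnoset
          constructor
          · intro i v hi
            by_cases hia : i = a
            · subst hia; rw [hnext] at hi; cases hi
            · rw [E.frozen k i hia] at hi
              exact absurd ⟨v, IHm i v hi⟩ hnoset
          · intro _
            refine ⟨⟨a, none, hnext⟩, ?_, ?_, ?_⟩
            · intro i v m hi
              obtain ⟨_, hv, hm⟩ := hset' i v m hi
              subst hv; subst hm; simp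
            · intro i v u hi
              obtain ⟨_, _, hm⟩ := hset' i v u hi
              cases hm
            · rintro v ⟨i, m, hi⟩
              obtain ⟨_, hv, _⟩ := hset' i v m hi
              exact ⟨0, fun _ => v, rfl, hv, fun j hj => absurd hj (Nat.not_lt_zero j)⟩
        · -- becomes mobile at s; settled set unchanged
          have hss : settledAt (E.cfg k) s := by
            by_contra hns
            exact hemp ⟨hns, hen.2⟩
          have hiff : ∀ i v m, E.cfg k i = AgentState.settled v m ↔
              E.cfg (k+1) i = AgentState.settled v m := by
            intro i v m
            by_cases hia : i = a
            · subst hia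
              rw [hc, hnext]
              constructor <;> (intro h; cases h)
            · rw [E.frozen k i hia]
          have hss' : settledAt (E.cfg (k+1)) s :=
            settled_mono' (fun i v m => (hiff i v m).1) hss
          constructor
          · intro i v hi
            by_cases hia : i = a
            · subst hia; rw [hnext] at hi; cases hi; exact hss'
            · rw [E.frozen k i hia] at hi
              exact settled_mono' (fun i v m => (hiff i v m).1) (IHm i v hi)
          · intro _
            exact markTree_congr' hiff (IHt ⟨s, hss⟩)
        · -- stays outside
          have heq : ∀ i, E.cfg (k+1) i = E.cfg k i := by
            intro i
            by_cases hia : i = a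
            · subst hia; rw [hnext, hc]
            · exact E.frozen k i hia
          constructor
          · intro i v hi
            rw [heq] at hi
            exact settled_mono' (fun i v m hm => (heq i).symm ▸ hm) (IHm i v hi)
          · rintro ⟨v, i, m, hi⟩
            rw [heq] at hi
            exact markTree_congr' (fun i v m => by rw [heq]) (IHt ⟨v, i, m, hi⟩)
      | mobile v =>
        rw [hc] at hact
        rcases hact with ⟨u, hadj, hsole, hnext⟩ | ⟨hno, u, hadj, hemp, hnext⟩ |
          ⟨hno, hnext⟩
        · -- moves to u (u has sole settled agent)
          have hiff : ∀ i w m, E.cfg k i = AgentState.settled w m ↔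
              E.cfg (k+1) i = AgentState.settled w m := by
            intro i w m
            by_cases hia : i = a
            · subst hia; rw [hc, hnext]
              constructor <;> (intro h; cases h)
            · rw [E.frozen k i hia]
          have hus : settledAt (E.cfg k) u := by
            obtain ⟨⟨j, hj⟩, _⟩ := hsole
            exact ⟨j, some v, hj⟩
          constructor
          · intro i w hi
            by_cases hia : i = a
            · subst hia; rw [hnext] at hi; cases hi
              exact settled_mono' (fun i v m => (hiff i v m).1) hus
            · rw [E.frozen k i hia] at hi
              exact settled_mono' (fun i v m => (hiff i v m).1) (IHm i w hi)
          · rintro ⟨w, i, m, hi⟩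
            rw [← hiff] at hi
            exact markTree_congr' hiff (IHt ⟨w, i, m, hi⟩)
        · -- settles at u, marking v
          have hvs : settledAt (E.cfg k) v := IHm a v hc
          have hT := IHt ⟨v, hvs⟩
          have hus : u ≠ s := by
            intro h; subst h; exact hemp.1 hT.1
          have h1 : ∀ i w m, E.cfg k i = AgentState.settled w m →
              E.cfg (k+1) i = AgentState.settled w m := by
            intro i w m hi
            by_cases hia : i = a
            · subst hia; rw [hc] at hi; cases hi
            · rw [E.frozen k i hia]; exact hi
          have hset' : ∀ i w m, E.cfg (k+1) i = AgentState.settled w m →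
              (i = a ∧ w = u ∧ m = some v) ∨ E.cfg k i = AgentState.settled w m := by
            intro i w m hi
            by_cases hia : i = a
            · subst hia; rw [hnext] at hi; cases hi; exact Or.inl ⟨rfl, rfl, rfl⟩
            · rw [E.frozen k i hia] at hi; exact Or.inr hi
          constructor
          · intro i w hi
            by_cases hia : i = a
            · subst hia; rw [hnext] at hi; cases hi
            · rw [E.frozen k i hia] at hi
              exact settled_mono' h1 (IHm i w hi)
          · intro _
            obtain ⟨hTs, hTm, hTadj, hTreach⟩ := hT
            refine ⟨settled_mono' h1 hTs, ?_, ?_, ?_⟩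
            · intro i w m hi
              rcases hset' i w m hi with ⟨_, hw, hm⟩ | hi'
              · subst hw; subst hm; simp [hus]
              · exact hTm i w m hi'
            · intro i w u' hi
              rcases hset' i w (some u') hi with ⟨_, hw, hm⟩ | hi'
              · cases hm; subst hw
                exact ⟨hadj.symm, settled_mono' h1 hvs⟩
              · obtain ⟨ha', hs'⟩ := hTadj i w u' hi'
                exact ⟨ha', settled_mono' h1 hs'⟩
            · have hreach_u : ∃ (n : ℕ) (f : ℕ → V), f 0 = u ∧ f n = s ∧
                  ∀ j < n, ∃ i, E.cfg (k+1) i = AgentState.settled (f j) (some (f (j+1))) := by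
                obtain ⟨n, f, hf0, hfn, hch⟩ := hTreach v hvs
                refine ⟨n + 1, fun j => match j with | 0 => u | j + 1 => f j,
                  rfl, hfn, ?_⟩
                intro j hj
                match j with
                | 0 =>
                  refine ⟨a, ?_⟩
                  simp only [hnext, hf0]
                | j + 1 =>
                  obtain ⟨i', hi'⟩ := hch j (by omega)
                  exact ⟨i', h1 _ _ _ hi'⟩
              rintro w ⟨i, m, hi⟩
              rcases hset' i w m hi with ⟨hia, hw, hm⟩ | hi'
              · rw [hw]; exact hreach_u
              · obtain ⟨n, f, hf0, hfn, hch⟩ := hTreach w ⟨i, m, hi'⟩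
                exact ⟨n, f, hf0, hfn, fun j hj => (hch j hj).imp fun i hi => h1 _ _ _ hi⟩
        · -- stays put
          have heq : ∀ i, E.cfg (k+1) i = E.cfg k i := by
            intro i
            by_cases hia : i = a
            · subst hia; rw [hnext, hc]
            · exact E.frozen k i hia
          constructor
          · intro i w hi
            rw [heq] at hi
            exact settled_mono' (fun i v m hm => (heq i).symm ▸ hm) (IHm i w hi)
          · rintro ⟨w, i, m, hi⟩
            rw [heq] at hi
            exact markTree_congr' (fun i v m => by rw [heq]) (IHt ⟨w, i, m, hi⟩)
      | settled w m =>
        rw [hc] at hact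
        have heq : ∀ i, E.cfg (k+1) i = E.cfg k i := by
          intro i
          by_cases hia : i = a
          · subst hia; rw [hact, hc]
          · exact E.frozen k i hia
        constructor
        · intro i w hi
          rw [heq] at hi
          exact settled_mono' (fun i v m hm => (heq i).symm ▸ hm) (IHm i w hi)
        · rintro ⟨w, i, m, hi⟩
          rw [heq] at hi
          exact markTree_congr' (fun i v m => by rw [heq]) (IHt ⟨w, i, m, hi⟩)
      | deleted =>
        rw [hc] at hact
        have heq : ∀ i, E.cfg (k+1) i = E.cfg k i := by
          intro i
          by_cases hia : i = a
          · subst hia; rw [hact, hc]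
          · exact E.frozen k i hia
        constructor
        · intro i w hi
          rw [heq] at hi
          exact settled_mono' (fun i v m hm => (heq i).symm ▸ hm) (IHm i w hi)
        · rintro ⟨w, i, m, hi⟩
          rw [heq] at hi
          exact markTree_congr' (fun i v m => by rw [heq]) (IHt ⟨w, i, m, hi⟩)
    · -- deletion
      have hleg := E.delLegal k hdel
      rw [← ha] at hleg
      have hdl := E.toExec.del k hdel
      rw [← ha] at hdl
      unfold AttemptsMove at hleg
      have hns : ∀ w m, E.cfg k a ≠ AgentState.settled w m := by
        intro w m h
        rw [h] at hleg
        exact hleg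
      have hiff : ∀ i v m, E.cfg k i = AgentState.settled v m ↔
          E.cfg (k+1) i = AgentState.settled v m := by
        intro i v m
        by_cases hia : i = a
        · subst hia
          constructor
          · intro h; exact absurd h (hns v m)
          · intro h; rw [hdl] at h; cases h
        · rw [E.frozen k i hia]
      constructor
      · intro i v hi
        by_cases hia : i = a
        · subst hia; rw [hdl] at hi; cases hi
        · rw [E.frozen k i hia] at hi
          exact settled_mono' (fun i v m => (hiff i v m).1) (IHm i v hi)
      · rintro ⟨v, i, m, hi⟩
        rw [← hiff] at hi
        exact markTree_congr' hiff (IHt ⟨v, i, m, hi⟩)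

end Aux

/-- For any execution of the dispersal rule on a graph
environment `G` (events occur sequentially at distinct times, so no two agents
settle at the same instant), the directed graph `G(t)` of settled agents and
their marks is a tree rooted at the source `s` at every time at which it is
nonempty. -/
theorem stmt0 {V : Type} [Fintype V] (G : SimpleGraph V) (hG : G.Connected) (s : V)
    (E : ExecG V G s) (k : ℕ) (hne : ∃ v, settledAt (E.cfg k) v) :
    IsMarkTree G s (E.cfg k) := by
  exact (main_inv E k).2 hne
end

section
/- For any event order S on a graph environment G, at the slow makespan of S on G every vertex of G contains a settled agent; consequently the makespan (the first time at which G(t) is a spanning tree of G) is at most the slow makespan of S on G. -/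
section Aux

variable {V : Type} {G : SimpleGraph V} {s : V}

/-- Settled agents stay settled with the same mark (deletions are only legal
for agents attempting to move). -/
lemma settled_step (EG : ExecG V G s) (k i : ℕ) (v : V) (m : Option V)
    (h : EG.cfg k i = AgentState.settled v m) :
    EG.cfg (k + 1) i = AgentState.settled v m := by
  by_cases hi : i = (EG.S.ev k).agent
  · subst hi
    cases hdel : (EG.S.ev k).isDel with
    | false =>
      have ha := EG.act k hdel
      simp only [ActOK, h] at ha
      exact ha
    | true =>
      have hd := EG.delLegal k hdel
      simp [AttemptsMove, h] at hd
  · rw [EG.frozen k i hi, h]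

lemma settledAt_step (EG : ExecG V G s) (k : ℕ) (v : V)
    (h : settledAt (EG.cfg k) v) : settledAt (EG.cfg (k + 1)) v := by
  obtain ⟨i, m, hi⟩ := h
  exact ⟨i, m, settled_step EG k i v m hi⟩

/-- Every vertex holding a mobile agent also holds a settled agent. -/
lemma mobile_settled (EG : ExecG V G s) :
    ∀ k v, mobileAt (EG.cfg k) v → settledAt (EG.cfg k) v := by
  intro k
  induction k with
  | zero =>
    rintro v ⟨i, hi⟩
    rw [EG.init i] at hi
    cases hi
  | succ k ih =>
    rintro v ⟨i, hi⟩
    by_cases hag : i = (EG.S.ev k).agent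
    · subst hag
      cases hdel : (EG.S.ev k).isDel with
      | true => rw [EG.del k hdel] at hi; cases hi
      | false =>
        have ha := EG.act k hdel
        rcases hc : EG.cfg k ((EG.S.ev k).agent) with _ | w | ⟨w, mw⟩ | _
        · -- outside
          simp only [ActOK, hc] at ha
          rcases ha with ⟨_, _, hn⟩ | ⟨hce, hne, hn⟩ | ⟨_, hn⟩
          · rw [hn] at hi; cases hi
          · rw [hn] at hi
            injection hi with hv
            rw [← hv]
            have hset : settledAt (EG.cfg k) s := by
              by_contra hns
              exact hne ⟨hns, hce.2⟩
            exact settledAt_step EG k s hset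
          · rw [hn] at hi; cases hi
        · -- mobile w
          simp only [ActOK, hc] at ha
          rcases ha with ⟨u, _, hsole, hn⟩ | ⟨_, u, _, _, hn⟩ | ⟨_, hn⟩
          · rw [hn] at hi
            injection hi with hv
            rw [← hv]
            obtain ⟨j, hj⟩ := hsole.1
            exact settledAt_step EG k u ⟨j, _, hj⟩
          · rw [hn] at hi; cases hi
          · rw [hn] at hi
            injection hi with hv
            rw [← hv]
            exact settledAt_step EG k w (ih w ⟨_, hc⟩)
        · -- settled
          simp only [ActOK, hc] at ha
          rw [ha] at hi; cases hi
        · -- deleted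
          simp only [ActOK, hc] at ha
          rw [ha] at hi; cases hi
    · rw [EG.frozen k i hag] at hi
      exact settledAt_step EG k v (ih v ⟨i, hi⟩)

/-- A slow vertex holds a settled agent. -/
lemma slow_settled (EG : ExecG V G s) (par : V → Option V) {k : ℕ} {v : V}
    (h : SlowVtx G s par EG.toExec k v) : settledAt (EG.cfg k) v := by
  induction h with
  | trigger k v hdel hmob hcant hall ih =>
    exact settledAt_step EG k v (mobile_settled EG k v ⟨_, hmob⟩)
  | persist k v h ih => exact settledAt_step EG k v ih

lemma chain_of_parIter (par : V → Option V) :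
    ∀ m v, parIter par m v = some s →
      ∃ f : ℕ → V, f 0 = v ∧ f m = s ∧ ∀ j < m, par (f j) = some (f (j + 1)) := by
  intro m
  induction m with
  | zero =>
    intro v h
    simp only [parIter, Option.some.injEq] at h
    exact ⟨fun _ => v, rfl, h, by omega⟩
  | succ m ih =>
    intro v h
    simp only [parIter] at h
    cases hp : par v with
    | none => rw [hp] at h; cases h
    | some u =>
      rw [hp] at h
      obtain ⟨g, hg0, hgm, hgc⟩ := ih u h
      refine ⟨fun j => Nat.casesOn j v (fun j' => g j'), rfl, hgm, ?_⟩
      intro j hj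
      cases j with
      | zero => show par v = some (g 0); rw [hg0]; exact hp
      | succ j' => exact hgc j' (by omega)

lemma mark_tree (EG : ExecG V G s) (TG : SpanningTreeOn V G s)
    (hmark : MarksFollow EG.toExec TG) (k : ℕ)
    (hall : ∀ v, settledAt (EG.cfg k) v) : IsMarkTree G s (EG.cfg k) := by
  refine ⟨hall s, ?_, ?_, ?_⟩
  · intro i v m h
    rw [← hmark k i v m h]
    exact TG.root_iff v
  · intro i v u h
    exact ⟨TG.adj v u (hmark k i v (some u) h), hall u⟩
  · intro v _
    obtain ⟨m, hm⟩ := TG.reach v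
    obtain ⟨f, hf0, hfm, hfc⟩ := chain_of_parIter TG.par m v hm
    refine ⟨m, f, hf0, hfm, ?_⟩
    intro j hj
    obtain ⟨i, m', hi⟩ := hall (f j)
    have : TG.par (f j) = m' := hmark k i (f j) m' hi
    refine ⟨i, ?_⟩
    rw [hi, ← this, hfc j hj]

end Aux

/-- For any event order on a graph environment `G` (presented as
an execution `EG` on `G`, with `TG` the spanning tree `T_S` it determines), at the
slow makespan every vertex of `G` contains a settled agent; consequently the
makespan — the first time `G(t)` is a spanning tree of `G` — is at most the slow
makespan of `S` on `G`. -/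
theorem stmt1 {V : Type} [Fintype V] (G : SimpleGraph V) (hG : G.Connected) (s : V)
    (EG : ExecG V G s) (TG : SpanningTreeOn V G s)
    (hmark : MarksFollow EG.toExec TG) (hmove : MovesOnTree EG.toExec TG) :
    (∀ k, (∀ v, SlowVtx G s TG.par EG.toExec k v) → ∀ v, settledAt (EG.cfg k) v) ∧
    firstStep (fun k => (∀ v, settledAt (EG.cfg k) v) ∧ IsMarkTree G s (EG.cfg k)) ≤
      firstStep (fun k => ∀ v, SlowVtx G s TG.par EG.toExec k v) := by
  have key : ∀ k, (∀ v, SlowVtx G s TG.par EG.toExec k v) →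
      ∀ v, settledAt (EG.cfg k) v :=
    fun k h v => slow_settled EG TG.par (h v)
  refine ⟨key, ?_⟩
  apply sInf_le_sInf
  rintro m ⟨k, rfl, hk⟩
  exact ⟨k, rfl, key k hk, mark_tree EG TG hmark k (key k hk)⟩
end

section
/- In the simulation of an event order S on the graph environment G, once an agent becomes slow it is forever unable to move and is never deleted by S. -/
section Stmt2Aux

variable {V : Type} {G : SimpleGraph V} {s : V} (EG : ExecG V G s)

lemma exG_settled_persist {k i v m} (h : EG.cfg k i = AgentState.settled v m) :
    EG.cfg (k + 1) i = AgentState.settled v m := by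
  by_cases hi : i = (EG.S.ev k).agent
  · subst hi
    rcases Bool.eq_false_or_eq_true (EG.S.ev k).isDel with hd | hd
    · have := EG.delLegal k hd
      rw [AttemptsMove.eq_def, h] at this
      simp at this
    · have := EG.act k hd
      rw [ActOK.eq_def, h] at this
      simpa using this
  · rw [EG.frozen k i hi, h]

lemma exG_settledAt_persist {k u} (h : settledAt (EG.cfg k) u) :
    settledAt (EG.cfg (k + 1)) u := by
  obtain ⟨i, m, hi⟩ := h
  exact ⟨i, m, exG_settled_persist EG hi⟩

/-- A mobile agent that cannot move stays put (and cannot be deleted). -/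
lemma exG_mobile_stuck {k i v} (h : EG.cfg k i = AgentState.mobile v)
    (hcm : ¬ canMoveFrom G (EG.cfg k) v) :
    EG.cfg (k + 1) i = AgentState.mobile v := by
  by_cases hi : i = (EG.S.ev k).agent
  · subst hi
    rcases Bool.eq_false_or_eq_true (EG.S.ev k).isDel with hd | hd
    · have := EG.delLegal k hd
      rw [AttemptsMove.eq_def, h] at this
      simp at this
      exact absurd this hcm
    · have := EG.act k hd
      rw [ActOK.eq_def, h] at this
      simp at this
      rcases this with ⟨u, hadj, hsm, hn⟩ | ⟨_, u, hadj, he, hn⟩ | ⟨_, hn⟩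
      · exact absurd ⟨u, hadj, Or.inl hsm⟩ hcm
      · exact absurd ⟨u, hadj, Or.inr he⟩ hcm
      · exact hn
  · rw [EG.frozen k i hi, h]
/-- Every mobile agent sits on a vertex holding a settled agent. -/
lemma exG_mobile_settledAt : ∀ k u, mobileAt (EG.cfg k) u → settledAt (EG.cfg k) u := by
  intro k
  induction k with
  | zero =>
    rintro u ⟨i, hi⟩
    rw [EG.init i] at hi
    exact absurd hi (by simp)
  | succ k ih =>
    rintro u ⟨i, hi⟩
    by_cases hia : i = (EG.S.ev k).agent
    · subst hia
      rcases Bool.eq_false_or_eq_true (EG.S.ev k).isDel with hd | hd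
      · rw [EG.del k hd] at hi; exact absurd hi (by simp)
      · have hact := EG.act k hd
        rw [ActOK.eq_def] at hact
        rcases hcase : EG.cfg k (EG.S.ev k).agent with _ | w | ⟨w, m⟩ | _
        · rw [hcase] at hact
          rcases hact with ⟨_, _, hn⟩ | ⟨⟨_, hnm⟩, hne, hn⟩ | ⟨_, hn⟩
          · rw [hn] at hi; exact absurd hi (by simp)
          · rw [hn] at hi
            rw [← AgentState.mobile.inj hi]
            have : settledAt (EG.cfg k) s := by
              by_contra hns
              exact hne ⟨hns, hnm⟩
            exact exG_settledAt_persist EG this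
          · rw [hn] at hi; exact absurd hi (by simp)
        · rw [hcase] at hact
          rcases hact with ⟨u', hadj, hsm, hn⟩ | ⟨_, u', hadj, he, hn⟩ | ⟨_, hn⟩
          · rw [hn] at hi
            have hu := AgentState.mobile.inj hi
            subst hu
            obtain ⟨⟨j, hj⟩, _⟩ := hsm
            exact exG_settledAt_persist EG ⟨j, some w, hj⟩
          · rw [hn] at hi; exact absurd hi (by simp)
          · rw [hn] at hi
            have hu := AgentState.mobile.inj hi
            subst hu
            exact exG_settledAt_persist EG (ih w ⟨_, hcase⟩)
        · rw [hcase] at hact; rw [hact] at hi; exact absurd hi (by simp)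
        · rw [hcase] at hact; rw [hact] at hi; exact absurd hi (by simp)
    · rw [EG.frozen k i hia] at hi
      exact exG_settledAt_persist EG (ih u ⟨i, hi⟩)

end Stmt2Aux
section Stmt2Main

variable {V : Type} {G : SimpleGraph V} {s : V} (EG : ExecG V G s)

/-- All tree-children of a slow vertex are slow. -/
lemma slowVtx_children {par : V → Option V} {k : ℕ} {v : V}
    (h : SlowVtx G s par EG.toExec k v) :
    ∀ u, par u = some v → SlowVtx G s par EG.toExec k u := by
  induction h with
  | trigger k v hd hm hcm hch => intro u hu; exact SlowVtx.persist _ _ (hch u hu)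
  | persist k v h ih => intro u hu; exact SlowVtx.persist _ _ (ih u hu)

/-- Invariant: a slow vertex carries a mobile agent that cannot move. -/
lemma exG_slow_inv (TG : SpanningTreeOn V G s) (hmark : MarksFollow EG.toExec TG) :
    ∀ k v, SlowVtx G s TG.par EG.toExec k v →
      mobileAt (EG.cfg k) v ∧ ¬ canMoveFrom G (EG.cfg k) v := by
  intro k
  induction k with
  | zero => intro v h; cases h
  | succ k ih =>
    intro v h
    cases h with
    | trigger _ _ hd hm hcm hch =>
      have hstay : EG.cfg (k + 1) (EG.S.ev k).agent = AgentState.mobile v :=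
        exG_mobile_stuck EG hm hcm
      have hcfg : EG.cfg (k + 1) = EG.cfg k := by
        funext j
        by_cases hj : j = (EG.S.ev k).agent
        · subst hj; rw [hstay, hm]
        · exact EG.frozen k j hj
      rw [hcfg]
      exact ⟨⟨_, hm⟩, hcm⟩
    | persist _ _ hs =>
      obtain ⟨hmob, hcm⟩ := ih v hs
      constructor
      · obtain ⟨j, hj⟩ := hmob
        exact ⟨j, exG_mobile_stuck EG hj hcm⟩
      · rintro ⟨u, hadj, hcase⟩
        rcases hcase with hsm1 | hemp1
        · obtain ⟨⟨j, hj⟩, hnm1⟩ := hsm1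
          by_cases hjk : EG.cfg k j = AgentState.settled u (some v)
          · have hpar : TG.par u = some v := hmark k j u (some v) hjk
            have hslu : SlowVtx G s TG.par EG.toExec k u := slowVtx_children EG hs u hpar
            obtain ⟨⟨j', hj'⟩, hcmu⟩ := ih u hslu
            exact hnm1 ⟨j', exG_mobile_stuck EG hj' hcmu⟩
          · have hja : j = (EG.S.ev k).agent := by
              by_contra hne
              exact hjk (by rw [← EG.frozen k j hne]; exact hj)
            subst hja
            rcases Bool.eq_false_or_eq_true (EG.S.ev k).isDel with hd | hd
            · rw [EG.del k hd] at hj; exact absurd hj (by simp)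
            · have hact := EG.act k hd
              rw [ActOK.eq_def] at hact
              rcases hc : EG.cfg k (EG.S.ev k).agent with _ | w | ⟨w, m⟩ | _
              · rw [hc] at hact
                rcases hact with ⟨_, _, hn⟩ | ⟨_, _, hn⟩ | ⟨_, hn⟩ <;> rw [hn] at hj <;>
                  simp at hj
              · rw [hc] at hact
                rcases hact with ⟨u', _, _, hn⟩ | ⟨_, u', hadj', he', hn⟩ | ⟨_, hn⟩
                · rw [hn] at hj; exact absurd hj (by simp)
                · rw [hn] at hj
                  obtain ⟨h1, h2⟩ := AgentState.settled.inj hj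
                  obtain h2 := Option.some.inj h2
                  subst h1; subst h2
                  exact hcm ⟨_, hadj, Or.inr he'⟩
                · rw [hn] at hj; exact absurd hj (by simp)
              · rw [hc] at hact; rw [hact] at hj
                obtain ⟨h1, h2⟩ := AgentState.settled.inj hj
                rw [h1, h2] at hc
                exact hjk hc
              · rw [hc] at hact; rw [hact] at hj; exact absurd hj (by simp)
        · have hne : ¬ emptyAt (EG.cfg k) u := fun he => hcm ⟨u, hadj, Or.inr he⟩
          have hset : settledAt (EG.cfg k) u := by
            by_cases hsu : settledAt (EG.cfg k) u
            · exact hsu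
            · have hmu : mobileAt (EG.cfg k) u := by
                by_contra hmn; exact hne ⟨hsu, hmn⟩
              exact exG_mobile_settledAt EG k u hmu
          exact hemp1.1 (exG_settledAt_persist EG hset)

end Stmt2Main

/-- In the simulation of an event order `S` on the graph
environment `G`, once an agent becomes slow (it occupies a slow vertex of the
spanning tree `T_S`), it is forever unable to move and is never deleted by `S`:
its state never changes again. -/
theorem stmt2 {V : Type} [Fintype V] (G : SimpleGraph V) (hG : G.Connected) (s : V)
    (EG : ExecG V G s) (TG : SpanningTreeOn V G s)
    (hmark : MarksFollow EG.toExec TG) (hmove : MovesOnTree EG.toExec TG)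
    (k i : ℕ) (v : V) (hpos : (EG.cfg k i).pos = some v)
    (hslow : SlowVtx G s TG.par EG.toExec k v) :
    ∀ k', k ≤ k' → EG.cfg k' i = EG.cfg k i := by
  have key : ∀ k', k ≤ k' →
      EG.cfg k' i = EG.cfg k i ∧ SlowVtx G s TG.par EG.toExec k' v := by
    intro k' hk'
    induction k', hk' using Nat.le_induction with
    | base => exact ⟨rfl, hslow⟩
    | succ k' hk' ih =>
      obtain ⟨heq, hsl⟩ := ih
      refine ⟨?_, SlowVtx.persist _ _ hsl⟩
      rcases hstate : EG.cfg k i with _ | w | ⟨w, m⟩ | _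
      · rw [hstate] at hpos; exact absurd hpos (by simp [AgentState.pos])
      · rw [hstate] at hpos
        have hw : w = v := by simpa [AgentState.pos] using hpos
        subst hw
        have h1 : EG.cfg k' i = AgentState.mobile w := by rw [heq, hstate]
        have hcm := (exG_slow_inv EG TG hmark k' w hsl).2
        rw [exG_mobile_stuck EG h1 hcm]
      · have h1 : EG.cfg k' i = AgentState.settled w m := by rw [heq, hstate]
        rw [exG_settled_persist EG h1, ← hstate]
      · rw [hstate] at hpos; exact absurd hpos (by simp [AgentState.pos])
  exact fun k' hk' => (key k' hk').1
end

section
/- For any event order S and at any time t, the number of mobile agents that have crossed the edge (v_0, v_1) in the simulation of S on B is at most the number of agents that have entered P*(∞) plus the number of agents that were deleted before entering P*(∞), in the simulation of S on P*(∞), by time t. -/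
/-- State of an agent in the environment `P*(∞)` (vertices `1, 2, 3, …`, each
holding a never-activated settled dummy agent marking its predecessor): the
indexed agents never settle, so they are outside, at a vertex, or deleted. -/
inductive PState where
  | outside : PState
  | inside (p : ℕ) : PState
  | deleted : PState

def PState.pos : PState → Option ℕ
  | .outside => none
  | .inside p => some p
  | .deleted => none

/-- Entrance rule in `P*(∞)`: an agent enters at vertex `1` when no mobile agent
is there and all lower-indexed agents have entered or been deleted. -/
def starCanEnter (c : ℕ → PState) (i : ℕ) : Prop :=
  (∀ j < i, c j ≠ PState.outside) ∧ ¬ ∃ j, c j = PState.inside 1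

/-- The local rule in `P*(∞)`: since every vertex holds exactly one settled dummy
agent marking its predecessor, a mobile agent at `p` moves to `p + 1` exactly when
no mobile agent occupies `p + 1`. -/
def StarActOK (c : ℕ → PState) (i : ℕ) (next : PState) : Prop :=
  match c i with
  | PState.outside =>
      (starCanEnter c i ∧ next = PState.inside 1) ∨
      (¬ starCanEnter c i ∧ next = PState.outside)
  | PState.inside p =>
      ((¬ ∃ j, c j = PState.inside (p + 1)) ∧ next = PState.inside (p + 1)) ∨
      ((∃ j, c j = PState.inside (p + 1)) ∧ next = PState.inside p)
  | PState.deleted => next = PState.deleted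

/-- Simulation of an event order on `P*(∞)`. -/
structure ExecStar (S : EventOrder) where
  st : ℕ → ℕ → PState
  init : ∀ i, st 0 i = PState.outside
  frozen : ∀ k j, j ≠ (S.ev k).agent → st (k + 1) j = st k j
  act : ∀ k, (S.ev k).isDel = false →
    StarActOK (st k) (S.ev k).agent (st (k + 1) (S.ev k).agent)
  del : ∀ k, (S.ev k).isDel = true → st (k + 1) (S.ev k).agent = PState.deleted

def starMovedAt {S : EventOrder} (E : ExecStar S) (i k : ℕ) : Prop :=
  ∃ p, (E.st (k + 1) i).pos = some p ∧ (E.st k i).pos ≠ some p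

/-- Depth of agent `i` in `P*(∞)`: number of successful moves before step `k`. -/
noncomputable def starDepth {S : EventOrder} (E : ExecStar S) (i k : ℕ) : ℕ :=
  Set.ncard {j | j < k ∧ starMovedAt E i j}

/-- Agent `i` has entered `P*(∞)` at or before step `k`. -/
def everEntered {S : EventOrder} (E : ExecStar S) (k i : ℕ) : Prop :=
  ∃ j ≤ k, ∃ p, E.st j i = PState.inside p

/-- Simulation of an event order on the two-sided infinite path `B` (vertices
`ℤ`, each holding a settled dummy marking its left neighbour): agent `i`
(representing `A_{i+1}`) starts as a mobile agent at vertex `-i` (the paper's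
`v_{-i+1}` for the 1-indexed `A_i`); there is no entry process; an activated
agent moves one step right unless a mobile agent blocks it; agents are never
deleted — scheduled deletions are treated as ordinary activations. -/
structure ExecB (S : EventOrder) where
  pos : ℕ → ℕ → ℤ
  init : ∀ i, pos 0 i = -(i : ℤ)
  frozen : ∀ k j, j ≠ (S.ev k).agent → pos (k + 1) j = pos k j
  step : ∀ k,
    ((¬ ∃ j, pos k j = pos k (S.ev k).agent + 1) ∧
      pos (k + 1) (S.ev k).agent = pos k (S.ev k).agent + 1) ∨
    ((∃ j, pos k j = pos k (S.ev k).agent + 1) ∧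
      pos (k + 1) (S.ev k).agent = pos k (S.ev k).agent)

/-- Depth of agent `i` in `B`: number of successful moves before step `k`. -/
noncomputable def depthB {S : EventOrder} (E : ExecB S) (i k : ℕ) : ℕ :=
  Set.ncard {j | j < k ∧ E.pos (j + 1) i ≠ E.pos j i}

private lemma star_persist {S : EventOrder} (Estar : ExecStar S) (k i : ℕ)
    (h : Estar.st k i ≠ PState.outside) : Estar.st (k+1) i ≠ PState.outside := by
  by_cases hi : i = (S.ev k).agent
  · subst hi
    by_cases hd : (S.ev k).isDel = true
    · rw [Estar.del k hd]; simp
    · have hA := Estar.act k (by simpa using hd)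
      cases hst : Estar.st k (S.ev k).agent with
      | outside => exact absurd hst h
      | inside p =>
        simp only [StarActOK, hst] at hA
        rcases hA with ⟨_, h2⟩ | ⟨_, h2⟩ <;> rw [h2] <;> simp
      | deleted =>
        simp only [StarActOK, hst] at hA
        rw [hA]; simp
  · rw [Estar.frozen k i hi]; exact h

private lemma star_persist_le {S : EventOrder} (Estar : ExecStar S) {j k i : ℕ}
    (hjk : j ≤ k) (h : Estar.st j i ≠ PState.outside) : Estar.st k i ≠ PState.outside := by
  induction k with
  | zero =>
    have : j = 0 := Nat.le_zero.mp hjk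
    subst this; exact h
  | succ k ih =>
    rcases Nat.lt_or_ge j (k+1) with h1 | h1
    · exact star_persist Estar k i (ih (by omega))
    · have : j = k + 1 := by omega
      subst this; exact h

private lemma star_event {S : EventOrder} (Estar : ExecStar S) (k i : ℕ)
    (h : Estar.st k i ≠ PState.outside) : ∃ j < k, (S.ev j).agent = i := by
  induction k with
  | zero => exact absurd (Estar.init i) h
  | succ k ih =>
    by_cases hi : i = (S.ev k).agent
    · exact ⟨k, Nat.lt_succ_self k, hi.symm⟩
    · rw [Estar.frozen k i hi] at h
      obtain ⟨j, hj, hj2⟩ := ih h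
      exact ⟨j, by omega, hj2⟩

/-- The joint invariant between the simulations on `B` and on `P*(∞)`. -/
private lemma main_inv_s10 {S : EventOrder} (EB : ExecB S) (Estar : ExecStar S) : ∀ k,
    (∀ i j : ℕ, i < j → EB.pos k j < EB.pos k i) ∧
    (∀ i, 1 ≤ EB.pos k i → Estar.st k i ≠ PState.outside) ∧
    (∀ i p, Estar.st k i = PState.inside p →
      EB.pos k i ≤ (p : ℤ) ∧ 1 ≤ p ∧ ∀ j < i, Estar.st k j ≠ PState.outside) ∧
    (∀ i j p q, i < j → Estar.st k i = PState.inside p →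
      Estar.st k j = PState.inside q → q < p) := by
  intro k
  induction k with
  | zero =>
    refine ⟨?_, ?_, ?_, ?_⟩
    · intro i j hij; rw [EB.init i, EB.init j]; omega
    · intro i h; rw [EB.init i] at h; omega
    · intro i p h; rw [Estar.init i] at h; exact absurd h (by simp)
    · intro i j p q _ h; rw [Estar.init i] at h; exact absurd h (by simp)
  | succ k ih =>
    obtain ⟨iA, iD, iE, iF⟩ := ih
    set a := (S.ev k).agent with ha
    have hstep : ((¬ ∃ j, EB.pos k j = EB.pos k a + 1) ∧
        EB.pos (k+1) a = EB.pos k a + 1) ∨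
      ((∃ j, EB.pos k j = EB.pos k a + 1) ∧ EB.pos (k+1) a = EB.pos k a) := EB.step k
    -- B-side move characterization
    have hBmono : ∀ j : ℕ, EB.pos k j ≤ EB.pos (k+1) j := by
      intro j
      by_cases hj : j = a
      · subst hj
        rcases hstep with ⟨_, h2⟩ | ⟨_, h2⟩ <;> rw [h2] <;> omega
      · rw [EB.frozen k j hj]
    -- (A')
    have hA' : ∀ i j : ℕ, i < j → EB.pos (k+1) j < EB.pos (k+1) i := by
      intro i j hij
      have hij' : i ≠ j := Nat.ne_of_lt hij
      by_cases hja : j = a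
      · subst hja
        have hia : i ≠ a := hij'
        rw [EB.frozen k i hia]
        rcases hstep with ⟨h1, h2⟩ | ⟨_, h2⟩
        · rw [h2]
          have := iA i a hij
          have := h1
          have hne : EB.pos k i ≠ EB.pos k a + 1 := fun hc => h1 ⟨i, hc⟩
          omega
        · rw [h2]; exact iA i a hij
      · by_cases hia : i = a
        · subst hia
          rw [EB.frozen k j hja]
          have := iA a j hij
          have := hBmono a
          omega
        · rw [EB.frozen k i hia, EB.frozen k j hja]
          exact iA i j hij
    -- star transition facts for agent a, when not a deletion
    by_cases hd : (S.ev k).isDel = true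
    · -- deletion: star state of a becomes deleted
      have hdel : Estar.st (k+1) a = PState.deleted := Estar.del k hd
      refine ⟨hA', ?_, ?_, ?_⟩
      · intro i _
        by_cases hia : i = a
        · subst hia; rw [hdel]; simp
        · rw [Estar.frozen k i hia]
          refine iD i ?_
          have := hBmono i
          rw [EB.frozen k i hia] at *
          omega
      · intro i p hi
        by_cases hia : i = a
        · subst hia; rw [hdel] at hi; exact absurd hi (by simp)
        · rw [Estar.frozen k i hia] at hi
          obtain ⟨h1, h2, h3⟩ := iE i p hi
          refine ⟨?_, h2, fun j hj => star_persist Estar k j (h3 j hj)⟩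
          rw [EB.frozen k i hia]; exact h1
      · intro i j p q hij hi hj
        by_cases hia : i = a
        · subst hia; rw [hdel] at hi; exact absurd hi (by simp)
        · by_cases hja : j = a
          · subst hja; rw [hdel] at hj; exact absurd hj (by simp)
          · rw [Estar.frozen k i hia] at hi
            rw [Estar.frozen k j hja] at hj
            exact iF i j p q hij hi hj
    · have hAct : StarActOK (Estar.st k) a (Estar.st (k+1) a) := Estar.act k (by simpa using hd)
      -- case on star state of a at k
      cases hst : Estar.st k a with
      | deleted =>
        simp only [StarActOK, hst] at hAct
        refine ⟨hA', ?_, ?_, ?_⟩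
        · intro i _
          by_cases hia : i = a
          · subst hia; rw [hAct]; simp
          · rw [Estar.frozen k i hia]
            refine iD i ?_
            rw [EB.frozen k i hia] at *
            omega
        · intro i p hi
          by_cases hia : i = a
          · subst hia; rw [hAct] at hi; exact absurd hi (by simp)
          · rw [Estar.frozen k i hia] at hi
            obtain ⟨h1, h2, h3⟩ := iE i p hi
            refine ⟨?_, h2, fun j hj => star_persist Estar k j (h3 j hj)⟩
            rw [EB.frozen k i hia]; exact h1
        · intro i j p q hij hi hj
          by_cases hia : i = a
          · subst hia; rw [hAct] at hi; exact absurd hi (by simp)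
          · by_cases hja : j = a
            · subst hja; rw [hAct] at hj; exact absurd hj (by simp)
            · rw [Estar.frozen k i hia] at hi
              rw [Estar.frozen k j hja] at hj
              exact iF i j p q hij hi hj
      | outside =>
        simp only [StarActOK, hst] at hAct
        -- if B copy of a is at position >= 1 that contradicts iD
        have hposa : EB.pos k a ≤ 0 := by
          by_contra hc
          exact (iD a (by omega)) hst
        refine ⟨hA', ?_, ?_, ?_⟩
        · -- (D')
          intro i hi
          by_cases hia : i = a
          · subst hia
            rcases hstep with ⟨h1, h2⟩ | ⟨_, h2⟩
            · rw [h2] at hi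
              have hzero : EB.pos k a = 0 := by omega
              -- a enters the star environment
              have hce : starCanEnter (Estar.st k) a := by
                constructor
                · intro j hj hcj
                  have hp : 0 < EB.pos k j := by
                    have := iA j a hj
                    omega
                  exact (iD j (by omega)) hcj
                · rintro ⟨j, hj⟩
                  obtain ⟨he1, he2, he3⟩ := iE j 1 hj
                  have hja : j ≠ a := by
                    intro hc; rw [hc, hst] at hj; exact absurd hj (by simp)
                  rcases Nat.lt_or_ge j a with hlt | hge
                  · have := iA j a hlt
                    have hne : EB.pos k j ≠ EB.pos k a + 1 := fun hc => h1 ⟨j, hc⟩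
                    omega
                  · have hgt : a < j := by omega
                    exact he3 a hgt hst
              rcases hAct with ⟨_, hn⟩ | ⟨hnc, _⟩
              · rw [hn]; simp
              · exact absurd hce hnc
            · rw [h2] at hi; omega
          · rw [Estar.frozen k i hia]
            rw [EB.frozen k i hia] at hi
            exact iD i hi
        · -- (E')
          intro i p hi
          by_cases hia : i = a
          · subst hia
            rcases hAct with ⟨hce, hn⟩ | ⟨_, hn⟩
            · rw [hn] at hi
              have hp1 : p = 1 := by
                injection hi with h; omega
              subst hp1
              refine ⟨?_, le_refl 1, ?_⟩
              · have := hBmono a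
                rcases hstep with ⟨_, h2⟩ | ⟨_, h2⟩ <;> rw [h2] <;> push_cast <;> omega
              · intro j hj
                exact star_persist Estar k j (hce.1 j hj)
            · rw [hn] at hi; exact absurd hi (by simp)
          · rw [Estar.frozen k i hia] at hi
            obtain ⟨h1, h2, h3⟩ := iE i p hi
            refine ⟨?_, h2, fun j hj => star_persist Estar k j (h3 j hj)⟩
            rw [EB.frozen k i hia]; exact h1
        · -- (F')
          intro i j p q hij hi hj
          by_cases hia : i = a
          · subst hia
            rcases hAct with ⟨hce, hn⟩ | ⟨_, hn⟩
            · -- a entered; but j > a has st k j = inside q, so st k a ≠ outside, contra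
              have hja : j ≠ a := Nat.ne_of_gt hij
              rw [Estar.frozen k j hja] at hj
              obtain ⟨_, _, h3⟩ := iE j q hj
              exact absurd hst (h3 a hij)
            · rw [hn] at hi; exact absurd hi (by simp)
          · by_cases hja : j = a
            · subst hja
              rw [Estar.frozen k i hia] at hi
              rcases hAct with ⟨hce, hn⟩ | ⟨_, hn⟩
              · rw [hn] at hj
                have hq1 : q = 1 := by injection hj with h; omega
                subst hq1
                obtain ⟨_, hp1, _⟩ := iE i p hi
                have hpne : p ≠ 1 := by
                  intro hc; subst hc; exact hce.2 ⟨i, hi⟩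
                omega
              · rw [hn] at hj; exact absurd hj (by simp)
            · rw [Estar.frozen k i hia] at hi
              rw [Estar.frozen k j hja] at hj
              exact iF i j p q hij hi hj
      | inside r =>
        simp only [StarActOK, hst] at hAct
        obtain ⟨hr1, hr2, hr3⟩ := iE a r hst
        -- star state of a at k+1 : inside (r+1) if free, else inside r, and
        -- in the blocked case the B copy does not pass r
        refine ⟨hA', ?_, ?_, ?_⟩
        · -- (D')
          intro i hi
          by_cases hia : i = a
          · subst hia
            rcases hAct with ⟨_, hn⟩ | ⟨_, hn⟩ <;> rw [hn] <;> simp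
          · rw [Estar.frozen k i hia]
            rw [EB.frozen k i hia] at hi
            exact iD i hi
        · -- (E')
          intro i p hi
          by_cases hia : i = a
          · subst hia
            rcases hAct with ⟨hfree, hn⟩ | ⟨hblock, hn⟩
            · rw [hn] at hi
              have hp : p = r + 1 := by injection hi with h; omega
              subst hp
              refine ⟨?_, by omega, fun j hj => star_persist Estar k j (hr3 j hj)⟩
              rcases hstep with ⟨_, h2⟩ | ⟨_, h2⟩ <;> rw [h2] <;> push_cast <;> omega
            · rw [hn] at hi
              have hp : p = r := by injection hi with h; omega
              subst hp
              refine ⟨?_, hr2, fun j hj => star_persist Estar k j (hr3 j hj)⟩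
              rcases hstep with ⟨h1, h2⟩ | ⟨_, h2⟩
              · -- B moved: show pos k a < p, via the star blocker
                rw [h2]
                obtain ⟨j, hj⟩ := hblock
                have hja : j ≠ a := by
                  intro hc; rw [hc, hst] at hj
                  injection hj with h; omega
                have hjlt : j < a := by
                  rcases Nat.lt_or_ge j a with h | h
                  · exact h
                  · have : a < j := by omega
                    have := iF a j p (p+1) this hst hj
                    omega
                obtain ⟨he1, _, _⟩ := iE j (p+1) hj
                have := iA j a hjlt
                have hne : EB.pos k j ≠ EB.pos k a + 1 := fun hc => h1 ⟨j, hc⟩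
                push_cast at he1 ⊢
                omega
              · rw [h2]; exact hr1
          · rw [Estar.frozen k i hia] at hi
            obtain ⟨h1, h2, h3⟩ := iE i p hi
            refine ⟨?_, h2, fun j hj => star_persist Estar k j (h3 j hj)⟩
            rw [EB.frozen k i hia]; exact h1
        · -- (F')
          intro i j p q hij hi hj
          by_cases hia : i = a
          · subst hia
            have hja : j ≠ a := Nat.ne_of_gt hij
            rw [Estar.frozen k j hja] at hj
            have hqr : q < r := iF a j r q hij hst hj
            rcases hAct with ⟨_, hn⟩ | ⟨_, hn⟩ <;> rw [hn] at hi <;>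
              injection hi with h <;> omega
          · by_cases hja : j = a
            · subst hja
              rw [Estar.frozen k i hia] at hi
              have hrp : r < p := iF i a p r hij hi hst
              rcases hAct with ⟨hfree, hn⟩ | ⟨_, hn⟩
              · rw [hn] at hj
                have hq : q = r + 1 := by injection hj with h; omega
                have hpne : p ≠ r + 1 := by
                  intro hc; subst hc; exact hfree ⟨i, hi⟩
                omega
              · rw [hn] at hj
                have hq : q = r := by injection hj with h; omega
                omega
            · rw [Estar.frozen k i hia] at hi
              rw [Estar.frozen k j hja] at hj
              exact iF i j p q hij hi hj

/-- Lemma 9 of the paper. For any event order `S` and at any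
time, the number of mobile agents that have crossed the edge `(v_0, v_1)` of `B`
(i.e. that occupy a vertex of index `≥ 1`) is at most the number of agents that
have entered `P*(∞)` plus the number of agents that were deleted before entering
`P*(∞)`. -/
theorem stmt10 (S : EventOrder) (EB : ExecB S) (Estar : ExecStar S) (k : ℕ) :
    Set.ncard {i | 1 ≤ EB.pos k i} ≤
      Set.ncard {i | everEntered Estar k i} +
        Set.ncard {i | Estar.st k i = PState.deleted ∧ ¬ everEntered Estar k i} := by
  classical
  set N : Set ℕ := {i | Estar.st k i ≠ PState.outside} with hN
  have hNfin : N.Finite := by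
    apply Set.Finite.subset (Set.finite_range (fun j : Fin k => (S.ev (j : ℕ)).agent))
    intro i hi
    obtain ⟨j, hj, hj2⟩ := star_event Estar k i hi
    exact ⟨⟨j, hj⟩, hj2⟩
  have hsub1 : {i : ℕ | 1 ≤ EB.pos k i} ⊆ N := by
    intro i hi
    exact (main_inv_s10 EB Estar k).2.1 i hi
  have hsub2 : N ⊆ {i | everEntered Estar k i} ∪
      {i | Estar.st k i = PState.deleted ∧ ¬ everEntered Estar k i} := by
    intro i hi
    by_cases he : everEntered Estar k i
    · exact Or.inl he
    · cases hst : Estar.st k i with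
      | outside => exact absurd hst hi
      | inside p => exact absurd ⟨k, le_refl k, p, hst⟩ he
      | deleted => exact Or.inr ⟨hst, he⟩
  have hEntN : {i | everEntered Estar k i} ⊆ N := by
    rintro i ⟨j, hj, p, hp⟩
    exact star_persist_le Estar hj (by rw [hp]; simp)
  have hDelN : {i | Estar.st k i = PState.deleted ∧ ¬ everEntered Estar k i} ⊆ N := by
    rintro i ⟨h1, _⟩
    rw [hN]; simp only [Set.mem_setOf_eq, h1]; simp
  calc Set.ncard {i | 1 ≤ EB.pos k i}
      ≤ Set.ncard N := Set.ncard_le_ncard hsub1 hNfin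
    _ ≤ Set.ncard ({i | everEntered Estar k i} ∪
        {i | Estar.st k i = PState.deleted ∧ ¬ everEntered Estar k i}) :=
        Set.ncard_le_ncard hsub2 ((hNfin.subset hEntN).union (hNfin.subset hDelN))
    _ ≤ _ := Set.ncard_union_le _ _
end

section
/- For any event order S, at every meaningful event time t_m and for every index i such that the copy of A_i in the simulation on P*(∞) has not been deleted, d(A_i^B, t_m) − i + 1 ≤ d(A_i^{P*(∞)}, t_m), where A_i^B and A_i^{P*(∞)} are the copies of A_i in the simulations on B and on P*(∞); equivalently, the index of the vertex occupied by A_i^B at time t_m is at most d(A_i^{P*(∞)}, t_m). -/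
namespace Stmt11Aux

lemma ncard_step_pos (P : ℕ → Prop) (k : ℕ) (h : P k) :
    Set.ncard {j | j < k + 1 ∧ P j} = Set.ncard {j | j < k ∧ P j} + 1 := by
  have hfin : Set.Finite {j | j < k ∧ P j} :=
    (Set.finite_Iio k).subset fun j hj => hj.1
  have hset : {j | j < k + 1 ∧ P j} = insert k {j | j < k ∧ P j} := by
    ext j
    simp only [Set.mem_setOf_eq, Set.mem_insert_iff]
    constructor
    · rintro ⟨hjk, hP⟩
      rcases Nat.lt_succ_iff_lt_or_eq.mp hjk with h' | h'
      · exact Or.inr ⟨h', hP⟩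
      · exact Or.inl h'
    · rintro (rfl | ⟨h1, h2⟩)
      · exact ⟨Nat.lt_succ_self _, h⟩
      · exact ⟨Nat.lt_succ_of_lt h1, h2⟩
  rw [hset, Set.ncard_insert_of_notMem (by simp) hfin]

lemma ncard_step_neg (P : ℕ → Prop) (k : ℕ) (h : ¬ P k) :
    Set.ncard {j | j < k + 1 ∧ P j} = Set.ncard {j | j < k ∧ P j} := by
  congr 1
  ext j
  simp only [Set.mem_setOf_eq]
  constructor
  · rintro ⟨hjk, hP⟩
    rcases Nat.lt_succ_iff_lt_or_eq.mp hjk with h' | h'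
    · exact ⟨h', hP⟩
    · exact absurd (h' ▸ hP) h
  · rintro ⟨h1, h2⟩; exact ⟨Nat.lt_succ_of_lt h1, h2⟩

variable {S : EventOrder}

lemma B_pos_step (EB : ExecB S) (k i : ℕ) :
    EB.pos (k + 1) i = EB.pos k i ∨ EB.pos (k + 1) i = EB.pos k i + 1 := by
  by_cases h : i = (S.ev k).agent
  · subst h
    rcases EB.step k with ⟨_, h2⟩ | ⟨_, h2⟩
    · exact Or.inr h2
    · exact Or.inl h2
  · exact Or.inl (EB.frozen k i h)

lemma depthB_eq_pos (EB : ExecB S) (i : ℕ) :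
    ∀ k, (depthB EB i k : ℤ) = EB.pos k i + i := by
  intro k
  induction k with
  | zero =>
    have hempty : {j | j < 0 ∧ EB.pos (j + 1) i ≠ EB.pos j i} = ∅ := by
      ext j; simp
    simp [depthB, hempty, EB.init i]
  | succ k ih =>
    by_cases h : EB.pos (k + 1) i ≠ EB.pos k i
    · have hcard := ncard_step_pos (fun j => EB.pos (j + 1) i ≠ EB.pos j i) k h
      have hmv : EB.pos (k + 1) i = EB.pos k i + 1 := by
        rcases B_pos_step EB k i with h' | h'
        · exact absurd h' h
        · exact h'
      simp only [depthB] at *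
      rw [hcard, hmv]
      push_cast
      omega
    · push_neg at h
      have hcard := ncard_step_neg (fun j => EB.pos (j + 1) i ≠ EB.pos j i) k
        (by simp [h])
      simp only [depthB] at *
      rw [hcard, h]
      exact ih

lemma B_order (EB : ExecB S) : ∀ k j i, j < i → EB.pos k i < EB.pos k j := by
  intro k
  induction k with
  | zero =>
    intro j i h
    rw [EB.init, EB.init]
    omega
  | succ k ih =>
    intro j i hji
    rcases EB.step k with ⟨hnb, hmv⟩ | ⟨_, hst⟩
    · by_cases hia : i = (S.ev k).agent
      · subst hia
        have hja : j ≠ (S.ev k).agent := Nat.ne_of_lt hji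
        rw [EB.frozen k j hja, hmv]
        have h1 : EB.pos k (S.ev k).agent < EB.pos k j := ih j _ hji
        have h2 : EB.pos k j ≠ EB.pos k (S.ev k).agent + 1 := fun hc => hnb ⟨j, hc⟩
        omega
      · by_cases hja : j = (S.ev k).agent
        · subst hja
          rw [EB.frozen k i hia, hmv]
          have := ih _ i hji
          omega
        · rw [EB.frozen k i hia, EB.frozen k j hja]
          exact ih j i hji
    · have hall : ∀ x, EB.pos (k + 1) x = EB.pos k x := by
        intro x
        by_cases hx : x = (S.ev k).agent
        · subst hx; exact hst
        · exact EB.frozen k x hx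
      rw [hall, hall]
      exact ih j i hji

/-- Case analysis for a single step of the star execution, for the acting agent. -/
lemma star_step (E : ExecStar S) (k : ℕ) :
    E.st (k + 1) (S.ev k).agent = PState.deleted ∨
    (E.st k (S.ev k).agent = PState.outside ∧ starCanEnter (E.st k) (S.ev k).agent ∧
      E.st (k + 1) (S.ev k).agent = PState.inside 1) ∨
    (E.st k (S.ev k).agent = PState.outside ∧ ¬ starCanEnter (E.st k) (S.ev k).agent ∧
      E.st (k + 1) (S.ev k).agent = PState.outside) ∨
    (∃ p, E.st k (S.ev k).agent = PState.inside p ∧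
      (¬ ∃ j, E.st k j = PState.inside (p + 1)) ∧
      E.st (k + 1) (S.ev k).agent = PState.inside (p + 1)) ∨
    (∃ p, E.st k (S.ev k).agent = PState.inside p ∧
      (∃ j, E.st k j = PState.inside (p + 1)) ∧
      E.st (k + 1) (S.ev k).agent = PState.inside p) := by
  by_cases hdel : (S.ev k).isDel = true
  · exact Or.inl (E.del k hdel)
  · have hact := E.act k (by simpa using hdel)
    cases hst : E.st k (S.ev k).agent with
    | outside =>
      rw [StarActOK, hst] at hact
      rcases hact with ⟨h1, h2⟩ | ⟨h1, h2⟩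
      · exact Or.inr (Or.inl ⟨rfl, h1, h2⟩)
      · exact Or.inr (Or.inr (Or.inl ⟨rfl, h1, h2⟩))
    | inside p =>
      rw [StarActOK, hst] at hact
      rcases hact with ⟨h1, h2⟩ | ⟨h1, h2⟩
      · exact Or.inr (Or.inr (Or.inr (Or.inl ⟨p, rfl, h1, h2⟩)))
      · exact Or.inr (Or.inr (Or.inr (Or.inr ⟨p, rfl, h1, h2⟩)))
    | deleted =>
      rw [StarActOK, hst] at hact
      exact Or.inl hact

lemma star_pos_ge_one (E : ExecStar S) : ∀ k i p, E.st k i = PState.inside p → 1 ≤ p := by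
  intro k
  induction k with
  | zero =>
    intro i p h
    rw [E.init i] at h
    exact absurd h (by simp)
  | succ k ih =>
    intro i p h
    by_cases hi : i = (S.ev k).agent
    · subst hi
      rcases star_step E k with h1 | ⟨_, _, h1⟩ | ⟨_, _, h1⟩ | ⟨q, hq, _, h1⟩ | ⟨q, hq, _, h1⟩ <;>
        rw [h1] at h
      · exact absurd h (by simp)
      · injection h with h2; omega
      · exact absurd h (by simp)
      · injection h with h2
        have := ih _ _ hq
        omega
      · injection h with h2
        have := ih _ _ hq
        omega
    · exact ih i p (by rw [← E.frozen k i hi]; exact h)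

lemma star_order (E : ExecStar S) : ∀ k j i p, j < i → E.st k i = PState.inside p →
    E.st k j ≠ PState.outside ∧ ∀ q, E.st k j = PState.inside q → p < q := by
  intro k
  induction k with
  | zero =>
    intro j i p _ h
    rw [E.init] at h
    exact absurd h (by simp)
  | succ k ih =>
    intro j i p hji hi
    by_cases hia : i = (S.ev k).agent
    · subst hia
      have hja : j ≠ (S.ev k).agent := Nat.ne_of_lt hji
      have hjf : E.st (k + 1) j = E.st k j := E.frozen k j hja
      rcases star_step E k with h1 | ⟨h0, hce, h1⟩ | ⟨h0, _, h1⟩ |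
          ⟨q0, hq0, hnb, h1⟩ | ⟨q0, hq0, hb, h1⟩
      · rw [h1] at hi; exact absurd hi (by simp)
      · rw [h1] at hi
        injection hi with hp
        subst hp
        rw [hjf]
        refine ⟨hce.1 j hji, fun q hq => ?_⟩
        have h1le := star_pos_ge_one E k j q hq
        have hne1 : q ≠ 1 := by
          intro hq1
          exact hce.2 ⟨j, hq1 ▸ hq⟩
        omega
      · rw [h1] at hi; exact absurd hi (by simp)
      · rw [h1] at hi
        injection hi with hp
        subst hp
        rw [hjf]
        obtain ⟨hne, hlt⟩ := ih j _ q0 hji hq0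
        refine ⟨hne, fun q hq => ?_⟩
        have := hlt q hq
        have hneq : q ≠ q0 + 1 := fun hc => hnb ⟨j, hc ▸ hq⟩
        omega
      · rw [h1] at hi
        injection hi with hp
        subst hp
        rw [hjf]
        exact ih j _ q0 hji hq0
    · have hif : E.st (k + 1) i = E.st k i := E.frozen k i hia
      rw [hif] at hi
      by_cases hja : j = (S.ev k).agent
      · subst hja
        rcases star_step E k with h1 | ⟨h0, hce, h1⟩ | ⟨h0, _, h1⟩ |
            ⟨q0, hq0, hnb, h1⟩ | ⟨q0, hq0, hb, h1⟩
        · rw [h1]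
          exact ⟨by simp, fun q hq => absurd hq (by simp)⟩
        · exact absurd h0 (ih _ i p hji hi).1
        · exact absurd h0 (ih _ i p hji hi).1
        · rw [h1]
          refine ⟨by simp, fun q hq => ?_⟩
          injection hq with hq
          have := (ih _ i p hji hi).2 q0 hq0
          omega
        · rw [h1]
          refine ⟨by simp, fun q hq => ?_⟩
          injection hq with hq
          have := (ih _ i p hji hi).2 q0 hq0
          omega
      · rw [E.frozen k j hja]
        exact ih j i p hji hi

lemma star_not_moved_of_eq (E : ExecStar S) (k i : ℕ)
    (h : E.st (k + 1) i = E.st k i) : ¬ starMovedAt E i k := by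
  rintro ⟨p, hp1, hp2⟩
  rw [h] at hp1
  exact hp2 hp1

lemma starDepth_formula (E : ExecStar S) (i : ℕ) :
    ∀ k, (E.st k i = PState.outside → starDepth E i k = 0) ∧
      (∀ p, E.st k i = PState.inside p → starDepth E i k = p) := by
  intro k
  induction k with
  | zero =>
    constructor
    · intro _
      have hempty : {j | j < 0 ∧ starMovedAt E i j} = ∅ := by ext; simp
      simp [starDepth, hempty]
    · intro p h
      rw [E.init] at h
      exact absurd h (by simp)
  | succ k ih =>
    have hpos := ncard_step_pos (starMovedAt E i) k
    have hneg := ncard_step_neg (starMovedAt E i) k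
    by_cases hi : i = (S.ev k).agent
    · subst hi
      rcases star_step E k with h1 | ⟨h0, _, h1⟩ | ⟨h0, _, h1⟩ |
          ⟨q0, hq0, _, h1⟩ | ⟨q0, hq0, _, h1⟩
      · exact ⟨fun h => absurd (h1 ▸ h) (by simp [h1] at h ⊢),
          fun p h => absurd (h1.symm.trans h) (by simp)⟩
      · have hmv : starMovedAt E (S.ev k).agent k :=
          ⟨1, by rw [h1]; rfl, by rw [h0]; simp [PState.pos]⟩
        refine ⟨fun h => absurd (h1.symm.trans h) (by simp), fun p h => ?_⟩
        have hp : p = 1 := by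
          rw [h1] at h
          injection h with h2
          omega
        subst hp
        simp only [starDepth] at *
        rw [hpos hmv, ih.1 h0]
      · have hnm : ¬ starMovedAt E (S.ev k).agent k :=
          star_not_moved_of_eq E k _ (h1.trans h0.symm)
        refine ⟨fun _ => ?_, fun p h => absurd (h1.symm.trans h) (by simp)⟩
        simp only [starDepth] at *
        rw [hneg hnm]
        exact ih.1 h0
      · have hmv : starMovedAt E (S.ev k).agent k :=
          ⟨q0 + 1, by rw [h1]; rfl, by rw [hq0]; simp [PState.pos]⟩
        refine ⟨fun h => absurd (h1.symm.trans h) (by simp), fun p h => ?_⟩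
        have hp : p = q0 + 1 := by
          rw [h1] at h
          injection h with h2
          omega
        subst hp
        simp only [starDepth] at *
        rw [hpos hmv, ih.2 q0 hq0]
      · have hnm : ¬ starMovedAt E (S.ev k).agent k :=
          star_not_moved_of_eq E k _ (h1.trans hq0.symm)
        refine ⟨fun h => absurd (h1.symm.trans h) (by simp), fun p h => ?_⟩
        have hp : p = q0 := by
          rw [h1] at h
          injection h with h2
          omega
        subst hp
        simp only [starDepth] at *
        rw [hneg hnm]
        exact ih.2 p hq0
    · have hf : E.st (k + 1) i = E.st k i := E.frozen k i hi
      have hnm : ¬ starMovedAt E i k := star_not_moved_of_eq E k i hf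
      constructor
      · intro h
        simp only [starDepth] at *
        rw [hneg hnm]
        exact ih.1 (hf ▸ h)
      · intro p h
        simp only [starDepth] at *
        rw [hneg hnm]
        exact ih.2 p (hf ▸ h)

lemma main_inv (EB : ExecB S) (E : ExecStar S) :
    ∀ k i, (E.st k i = PState.outside → EB.pos k i ≤ 0) ∧
      (∀ p, E.st k i = PState.inside p → EB.pos k i ≤ (p : ℤ)) := by
  intro k
  induction k with
  | zero =>
    intro i
    constructor
    · intro _
      rw [EB.init]
      omega
    · intro p h
      rw [E.init] at h
      exact absurd h (by simp)
  | succ k ih =>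
    intro i
    by_cases hi : i = (S.ev k).agent
    · subst hi
      have hBle : EB.pos (k + 1) (S.ev k).agent ≤ EB.pos k (S.ev k).agent + 1 := by
        rcases B_pos_step EB k (S.ev k).agent with h | h <;> omega
      rcases star_step E k with h1 | ⟨h0, hce, h1⟩ | ⟨h0, hne, h1⟩ |
          ⟨q0, hq0, hnb, h1⟩ | ⟨q0, hq0, hb, h1⟩
      · exact ⟨fun h => absurd (h1.symm.trans h) (by simp),
          fun p h => absurd (h1.symm.trans h) (by simp)⟩
      · refine ⟨fun h => absurd (h1.symm.trans h) (by simp), fun p h => ?_⟩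
        have hp : p = 1 := by
          rw [h1] at h; injection h with h2; omega
        subst hp
        have := (ih (S.ev k).agent).1 h0
        push_cast
        omega
      · refine ⟨fun _ => ?_, fun p h => absurd (h1.symm.trans h) (by simp)⟩
        rcases EB.step k with ⟨hnbB, hmvB⟩ | ⟨_, hstB⟩
        · rcases not_and_or.mp hne with hA | hB
          · push_neg at hA
            obtain ⟨j, hjlt, hout⟩ := hA
            have hj0 : EB.pos k j ≤ 0 := (ih j).1 hout
            have hord : EB.pos k (S.ev k).agent < EB.pos k j := B_order EB k j _ hjlt
            have hneq : EB.pos k j ≠ EB.pos k (S.ev k).agent + 1 := fun hc => hnbB ⟨j, hc⟩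
            omega
          · rw [not_not] at hB
            obtain ⟨j, hj⟩ := hB
            have hja : j ≠ (S.ev k).agent := by
              intro hc
              rw [hc, h0] at hj
              exact absurd hj (by simp)
            have hjlt : j < (S.ev k).agent := by
              rcases lt_or_gt_of_ne hja with h | h
              · exact h
              · exact absurd h0 (star_order E k _ j 1 h hj).1
            have hj1 : EB.pos k j ≤ (1 : ℤ) := (ih j).2 1 hj
            have hord : EB.pos k (S.ev k).agent < EB.pos k j := B_order EB k j _ hjlt
            have hneq : EB.pos k j ≠ EB.pos k (S.ev k).agent + 1 := fun hc => hnbB ⟨j, hc⟩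
            omega
        · have := (ih (S.ev k).agent).1 h0
          omega
      · refine ⟨fun h => absurd (h1.symm.trans h) (by simp), fun p h => ?_⟩
        have hp : p = q0 + 1 := by
          rw [h1] at h; injection h with h2; omega
        subst hp
        have := (ih (S.ev k).agent).2 q0 hq0
        push_cast
        omega
      · refine ⟨fun h => absurd (h1.symm.trans h) (by simp), fun p h => ?_⟩
        have hp : p = q0 := by
          rw [h1] at h; injection h with h2; omega
        subst hp
        have hq0le := (ih (S.ev k).agent).2 p hq0
        rcases EB.step k with ⟨hnbB, hmvB⟩ | ⟨_, hstB⟩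
        · obtain ⟨j, hj⟩ := hb
          have hja : j ≠ (S.ev k).agent := by
            intro hc
            rw [hc, hq0] at hj
            injection hj with hj2
            omega
          have hjlt : j < (S.ev k).agent := by
            rcases lt_or_gt_of_ne hja with h' | h'
            · exact h'
            · have := (star_order E k _ j (p + 1) h' hj).2 p hq0
              omega
          have hjle : EB.pos k j ≤ ((p + 1 : ℕ) : ℤ) := (ih j).2 (p + 1) hj
          have hord : EB.pos k (S.ev k).agent < EB.pos k j := B_order EB k j _ hjlt
          have hneq : EB.pos k j ≠ EB.pos k (S.ev k).agent + 1 := fun hc => hnbB ⟨j, hc⟩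
          push_cast at hjle ⊢
          omega
        · omega
    · have hst : E.st (k + 1) i = E.st k i := E.frozen k i hi
      have hp : EB.pos (k + 1) i = EB.pos k i := EB.frozen k i hi
      rw [hst, hp]
      exact ih i

end Stmt11Aux

/-- Inequality (6) of the paper. For any event order `S`, at
every meaningful event time `t_m` and every index `i` (agent `A_{i+1}` in the
paper's 1-indexing) whose copy in `P*(∞)` has not been deleted,
`d(A_i^B, t_m) − i + 1 ≤ d(A_i^{P*(∞)}, t_m)`; equivalently, the index of the
vertex occupied by `A_i^B` at `t_m` is at most `d(A_i^{P*(∞)}, t_m)`. -/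
theorem stmt11 (S : EventOrder) (EB : ExecB S) (Estar : ExecStar S)
    (M : MeaningfulTimes S) (m i : ℕ)
    (hdel : Estar.st (M.idx m) i ≠ PState.deleted) :
    (depthB EB i (M.idx m) : ℤ) - i ≤ (starDepth Estar i (M.idx m) : ℤ) ∧
      EB.pos (M.idx m) i ≤ (starDepth Estar i (M.idx m) : ℤ) := by
  set k := M.idx m with hk
  have hinv := Stmt11Aux.main_inv EB Estar k i
  have hdf := Stmt11Aux.starDepth_formula Estar i k
  have hpos : EB.pos k i ≤ (starDepth Estar i k : ℤ) := by
    cases hst : Estar.st k i with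
    | outside =>
      rw [hdf.1 hst]
      simpa using hinv.1 hst
    | inside p =>
      rw [hdf.2 p hst]
      exact hinv.2 p hst
    | deleted => exact absurd hst hdel
  have hBd := Stmt11Aux.depthB_eq_pos EB i k
  exact ⟨by omega, hpos⟩
end
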